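/- The node reliability polynomial of any tree on $n \geq 4$ vertices has at least one inflection point in the open interval $(0,1)$; that is, the second derivative of $\mathrm{nRel}(T;p)$ changes sign on $(0,1)$. -/

import Mathlib

open Finset
open scoped Classical

/-- The node reliability polynomial of a graph `G`: the probability that the set of
operational nodes is nonempty and induces a connected subgraph, when each node
operates independently with probability `p`. -/
noncomputable def nRel {V : Type*} [Fintype V] (G : SimpleGraph V) (p : ℝ) : ℝ :=
  ∑ s : Finset V, if (G.induce (s : Set V)).Connected
    then p ^ s.card * (1 - p) ^ (Fintype.card V - s.card) else 0

/-- `cCount G k` is the number of `k`-element vertex subsets of `G` inducing a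
connected subgraph (note: `SimpleGraph.Connected` requires nonemptiness). -/
noncomputable def cCount {V : Type*} [Fintype V] (G : SimpleGraph V) (k : ℕ) : ℕ :=
  ((Finset.univ : Finset (Finset V)).filter
    (fun s : Finset V => s.card = k ∧ (G.induce (s : Set V)).Connected)).card

set_option linter.unusedSectionVars false
set_option maxHeartbeats 1000000

namespace NRelAux
open Polynomial
open Polynomial
variable {V : Type*} [Fintype V]

noncomputable def relPoly (G : SimpleGraph V) : Polynomial ℝ :=
  ∑ s : Finset V, if (G.induce (s : Set V)).Connected
    then (X : ℝ[X]) ^ s.card * (1 - X) ^ (Fintype.card V - s.card) else 0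

lemma nRel_eq (G : SimpleGraph V) : nRel G = fun p => (relPoly G).eval p := by
  funext p
  simp only [nRel, relPoly, Polynomial.eval_finset_sum, apply_ite (Polynomial.eval p),
    Polynomial.eval_mul, Polynomial.eval_pow, Polynomial.eval_sub, Polynomial.eval_one,
    Polynomial.eval_X, Polynomial.eval_zero]

lemma conn_nonempty {G : SimpleGraph V} {s : Finset V}
    (h : (G.induce (s : Set V)).Connected) : s.Nonempty := by
  obtain ⟨⟨x, hx⟩⟩ := h.nonempty
  exact ⟨x, hx⟩

lemma singleton_conn (G : SimpleGraph V) (v : V) :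
    (G.induce (({v} : Finset V) : Set V)).Connected := by
  rw [Finset.coe_singleton]
  have : Nonempty (({v} : Set V)) := ⟨⟨v, rfl⟩⟩
  constructor
  intro a b
  have : a = b := Subsingleton.elim a b
  rw [this]

lemma filter_card_eq (k : ℕ) :
    ((Finset.univ : Finset (Finset V)).filter (fun s : Finset V => s.card = k)).card
      = (Fintype.card V).choose k := by
  have h : (Finset.univ : Finset (Finset V)).filter (fun s : Finset V => s.card = k)
      = Finset.powersetCard k (Finset.univ : Finset V) := by
    ext s
    simp [Finset.mem_powersetCard_univ]
  rw [h, Finset.card_powersetCard, Finset.card_univ]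

lemma cCount_one (G : SimpleGraph V) : cCount G 1 = Fintype.card V := by
  rw [cCount]
  have h : (Finset.univ : Finset (Finset V)).filter
      (fun s : Finset V => s.card = 1 ∧ (G.induce (s : Set V)).Connected)
      = (Finset.univ : Finset (Finset V)).filter (fun s : Finset V => s.card = 1) := by
    ext s
    simp only [Finset.mem_filter, Finset.mem_univ, true_and, and_iff_left_iff_imp]
    intro hs
    obtain ⟨v, rfl⟩ := Finset.card_eq_one.mp hs
    exact singleton_conn G v
  rw [h, filter_card_eq, Nat.choose_one_right]

lemma cCount_le (G : SimpleGraph V) (k : ℕ) : cCount G k ≤ (Fintype.card V).choose k := by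
  rw [cCount, ← filter_card_eq (V := V) k]
  apply Finset.card_le_card
  intro s hs
  simp only [Finset.mem_filter] at *
  exact ⟨hs.1, hs.2.1⟩

lemma cCount_univ {G : SimpleGraph V} (hG : G.Connected) :
    cCount G (Fintype.card V) = 1 := by
  rw [cCount]
  have h : (Finset.univ : Finset (Finset V)).filter
      (fun s : Finset V => s.card = Fintype.card V ∧ (G.induce (s : Set V)).Connected)
      = {Finset.univ} := by
    ext s
    simp only [Finset.mem_filter, Finset.mem_univ, true_and, Finset.mem_singleton]
    constructor
    · rintro ⟨h1, _⟩; exact Finset.eq_univ_of_card s h1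
    · rintro rfl
      refine ⟨Finset.card_univ, ?_⟩
      rw [Finset.coe_univ]
      exact (G.induceUnivIso.connected_iff).mpr hG
  rw [h, Finset.card_singleton]



lemma cut_vertex {T : SimpleGraph V} (hac : T.IsAcyclic) {v x y : V}
    (hx : T.Adj v x) (hy : T.Adj v y) (hxy : x ≠ y) :
    ¬ (T.induce ({v}ᶜ : Set V)).Connected := by
  intro hc
  have hxv : x ≠ v := fun h => (T.irrefl (h ▸ hx)).elim
  have hyv : y ≠ v := fun h => (T.irrefl (h ▸ hy)).elim
  have hxmem : (x : V) ∈ ({v}ᶜ : Set V) := by simp [hxv]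
  have hymem : (y : V) ∈ ({v}ᶜ : Set V) := by simp [hyv]
  obtain ⟨w⟩ := hc.preconnected ⟨x, hxmem⟩ ⟨y, hymem⟩
  let emb := SimpleGraph.Embedding.induce ({v}ᶜ : Set V) (G := T)
  let w' : T.Walk x y := w.map emb.toHom
  have hvsup : v ∉ w'.support := by
    intro hv
    rw [show v ∈ w'.support ↔ v ∈ (w.map emb.toHom).support from Iff.rfl, SimpleGraph.Walk.support_map] at hv
    obtain ⟨⟨a, ha⟩, _, hav⟩ := List.mem_map.mp hv
    exact ha (by simp [← hav]; rfl)
  -- path avoiding v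
  let p1 : T.Path x y := w'.toPath
  have hvp1 : v ∉ (p1 : T.Walk x y).support := fun h =>
    hvsup (SimpleGraph.Walk.support_toPath_subset w' h)
  -- path through v
  let w2 : T.Walk x y := SimpleGraph.Walk.cons hx.symm (SimpleGraph.Walk.cons hy SimpleGraph.Walk.nil)
  have hw2 : w2.IsPath := by
    simp [w2, SimpleGraph.Walk.isPath_def, hxv, hxy, hyv.symm]
  let p2 : T.Path x y := ⟨w2, hw2⟩
  have hvp2 : v ∈ (p2 : T.Walk x y).support := by
    simp [p2, w2]
  have := (SimpleGraph.isAcyclic_iff_path_unique.mp hac) p1 p2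
  rw [this] at hvp1
  exact hvp1 hvp2

lemma exists_deg2 {T : SimpleGraph V} (hT : T.Connected) (hac : T.IsAcyclic)
    (hn : 3 ≤ Fintype.card V) : ∃ v, 2 ≤ T.degree v := by
  by_contra h
  push_neg at h
  have hsum : ∑ v, T.degree v = 2 * T.edgeFinset.card :=
    SimpleGraph.sum_degrees_eq_twice_card_edges T
  have hedge : T.edgeFinset.card + 1 = Fintype.card V :=
    SimpleGraph.IsTree.card_edgeFinset ⟨hT, hac⟩
  have hle : ∑ v, T.degree v ≤ ∑ _v : V, 1 :=
    Finset.sum_le_sum (fun v _ => Nat.lt_succ_iff.mp (h v))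
  simp only [Finset.sum_const, Finset.card_univ, smul_eq_mul, mul_one] at hle
  rw [hsum] at hle
  omega

lemma cCount_pred {T : SimpleGraph V} (hT : T.Connected) (hac : T.IsAcyclic)
    (hn : 3 ≤ Fintype.card V) :
    cCount T (Fintype.card V - 1) ≤ Fintype.card V - 1 := by
  obtain ⟨v, hv⟩ := exists_deg2 hT hac hn
  rw [← SimpleGraph.card_neighborFinset_eq_degree] at hv
  obtain ⟨x, hxm, y, hym, hxy⟩ := Finset.one_lt_card.mp hv
  rw [SimpleGraph.mem_neighborFinset] at hxm hym
  have hnc : ¬ (T.induce ((Finset.univ.erase v : Finset V) : Set V)).Connected := by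
    have : ((Finset.univ.erase v : Finset V) : Set V) = ({v}ᶜ : Set V) := by
      ext a; simp [eq_comm]
    rw [this]
    exact cut_vertex hac hxm hym hxy
  have hsub : (Finset.univ : Finset (Finset V)).filter
      (fun s : Finset V => s.card = Fintype.card V - 1 ∧ (T.induce (s : Set V)).Connected)
      ⊆ ((Finset.univ : Finset (Finset V)).filter
        (fun s : Finset V => s.card = Fintype.card V - 1)).erase (Finset.univ.erase v) := by
    intro s hs
    simp only [Finset.mem_filter, Finset.mem_univ, true_and] at hs
    rw [Finset.mem_erase]
    refine ⟨?_, by simp [Finset.mem_filter, hs.1]⟩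
    intro h
    rw [h] at hs
    exact hnc hs.2
  have hcard := Finset.card_le_card hsub
  have hmem : Finset.univ.erase v ∈ (Finset.univ : Finset (Finset V)).filter
      (fun s : Finset V => s.card = Fintype.card V - 1) := by
    simp [Finset.card_erase_of_mem, Finset.card_univ]
  rw [Finset.card_erase_of_mem hmem, filter_card_eq] at hcard
  have hch : (Fintype.card V).choose (Fintype.card V - 1) = Fintype.card V := by
    rw [Nat.choose_symm (by omega : 1 ≤ Fintype.card V), Nat.choose_one_right]
  rw [cCount]
  omega




lemma coeff_zero_osp (m : ℕ) : ((1 - X : ℝ[X]) ^ m).coeff 0 = 1 := by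
  rw [Polynomial.coeff_zero_eq_eval_zero]
  simp

lemma coeff_one_osp (m : ℕ) : ((1 - X : ℝ[X]) ^ m).coeff 1 = -(m : ℝ) := by
  have h : ((1 - X : ℝ[X]) ^ m).coeff 1 * 1 = (derivative ((1 - X : ℝ[X]) ^ m)).coeff 0 := by
    rw [Polynomial.coeff_derivative]
    norm_num
  rw [mul_one] at h
  rw [h, Polynomial.coeff_zero_eq_eval_zero, Polynomial.derivative_pow]
  simp

lemma coeff2_k1 (m : ℕ) : ((X : ℝ[X]) ^ 1 * (1 - X) ^ m).coeff 2 = -(m : ℝ) := by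
  have h := Polynomial.coeff_X_pow_mul ((1 - X : ℝ[X]) ^ m) 1 1
  rw [show (2:ℕ) = 1 + 1 from rfl, h, coeff_one_osp]

lemma coeff2_k2 (m : ℕ) : ((X : ℝ[X]) ^ 2 * (1 - X) ^ m).coeff 2 = 1 := by
  have h := Polynomial.coeff_X_pow_mul ((1 - X : ℝ[X]) ^ m) 2 0
  rw [show (2:ℕ) = 0 + 2 from rfl, h, coeff_zero_osp]

lemma coeff2_big (k m : ℕ) (h : 3 ≤ k) : ((X : ℝ[X]) ^ k * (1 - X) ^ m).coeff 2 = 0 := by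
  rw [mul_comm, Polynomial.coeff_mul_X_pow']
  simp [Nat.not_le.mpr (by omega : 2 < k)]

lemma deval1_gen (k m : ℕ) :
    Polynomial.eval 1 (derivative ((X : ℝ[X]) ^ k * (1 - X) ^ m))
      = (k : ℝ) * 0 ^ m - (m : ℝ) * 0 ^ (m - 1) := by
  simp [Polynomial.derivative_mul, Polynomial.derivative_pow]
  ring



variable {V : Type*} [Fintype V]

lemma sum_if_const (P : Finset V → Prop) (c : ℝ) :
    (∑ s : Finset V, if P s then c else 0) = (((Finset.univ : Finset (Finset V)).filter P).card : ℝ) * c := by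
  rw [← Finset.sum_filter, Finset.sum_const, nsmul_eq_mul]

lemma cCount_eq_filter (G : SimpleGraph V) (k : ℕ) :
    (((Finset.univ : Finset (Finset V)).filter
      (fun s : Finset V => s.card = k ∧ (G.induce (s : Set V)).Connected)).card : ℝ)
    = (cCount G k : ℝ) := rfl

lemma coeff2_relPoly (G : SimpleGraph V) :
    (relPoly G).coeff 2
      = (cCount G 2 : ℝ) - ((Fintype.card V : ℝ) - 1) * (cCount G 1 : ℝ) := by
  classical
  rw [relPoly, Polynomial.finset_sum_coeff]
  have key : ∀ s : Finset V,
      (if (G.induce (s : Set V)).Connected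
        then (X : ℝ[X]) ^ s.card * (1 - X) ^ (Fintype.card V - s.card) else 0).coeff 2
      = (if s.card = 2 ∧ (G.induce (s : Set V)).Connected then (1:ℝ) else 0)
        + (if s.card = 1 ∧ (G.induce (s : Set V)).Connected
            then -(((Fintype.card V : ℝ) - 1)) else 0) := by
    intro s
    by_cases hc : (G.induce (s : Set V)).Connected
    · have hpos : 1 ≤ s.card := Finset.card_pos.mpr (conn_nonempty hc)
      have hle : s.card ≤ Fintype.card V := Finset.card_le_univ s
      rw [if_pos hc]
      rcases Nat.lt_or_ge s.card 3 with h3 | h3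
      · interval_cases h : s.card
        · rw [coeff2_k1]
          have h1 : (1:ℕ) ≤ Fintype.card V := hle
          simp [hc]
          push_cast [Nat.cast_sub h1]
          ring
        · rw [coeff2_k2]
          simp [hc]
      · rw [coeff2_big _ _ h3]
        have h1 : s.card ≠ 1 := by omega
        have h2 : s.card ≠ 2 := by omega
        simp [h1, h2]
    · simp [hc]
  simp only [key]
  rw [Finset.sum_add_distrib]
  simp only [← Finset.sum_filter, Finset.sum_const, nsmul_eq_mul]
  rw [cCount_eq_filter, cCount_eq_filter]
  ring


lemma deval1_top (n : ℕ) :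
    Polynomial.eval 1 (derivative ((X : ℝ[X]) ^ n * (1 - X) ^ (n - n))) = (n : ℝ) := by
  rw [deval1_gen]
  simp

lemma deval1_pred (n : ℕ) (hn : 1 ≤ n) :
    Polynomial.eval 1 (derivative ((X : ℝ[X]) ^ (n-1) * (1 - X) ^ (n - (n-1)))) = -1 := by
  rw [deval1_gen]
  rw [show n - (n-1) = 1 by omega]
  norm_num

lemma deval1_small (n k : ℕ) (hk : k + 2 ≤ n) :
    Polynomial.eval 1 (derivative ((X : ℝ[X]) ^ k * (1 - X) ^ (n - k))) = 0 := by
  rw [deval1_gen]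
  obtain ⟨j, hj⟩ : ∃ j, n - k = j + 2 := ⟨n - k - 2, by omega⟩
  rw [hj]
  norm_num

lemma deriv_eval_one_relPoly (G : SimpleGraph V) (hn : 1 ≤ Fintype.card V) :
    Polynomial.eval 1 (derivative (relPoly G))
      = (Fintype.card V : ℝ) * (cCount G (Fintype.card V) : ℝ)
        - (cCount G (Fintype.card V - 1) : ℝ) := by
  classical
  rw [relPoly, Polynomial.derivative_sum, Polynomial.eval_finset_sum]
  have key : ∀ s : Finset V,
      Polynomial.eval 1 (derivative (if (G.induce (s : Set V)).Connected
        then (X : ℝ[X]) ^ s.card * (1 - X) ^ (Fintype.card V - s.card) else 0))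
      = (if s.card = Fintype.card V ∧ (G.induce (s : Set V)).Connected
          then (Fintype.card V : ℝ) else 0)
        + (if s.card = Fintype.card V - 1 ∧ (G.induce (s : Set V)).Connected
            then (-1 : ℝ) else 0) := by
    intro s
    by_cases hc : (G.induce (s : Set V)).Connected
    · rw [if_pos hc]
      have hle : s.card ≤ Fintype.card V := Finset.card_le_univ s
      rcases eq_or_ne s.card (Fintype.card V) with h | h
      · rw [h, deval1_top]
        have hne : Fintype.card V ≠ Fintype.card V - 1 := by omega
        simp [hc, hne]
      · rcases eq_or_ne s.card (Fintype.card V - 1) with h2 | h2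
        · rw [h2, deval1_pred _ hn]
          have hne : Fintype.card V - 1 ≠ Fintype.card V := by omega
          simp [hc, hne]
        · rw [deval1_small _ _ (by omega)]
          simp [h, h2]
    · simp [hc]
  simp only [key]
  rw [Finset.sum_add_distrib]
  simp only [← Finset.sum_filter, Finset.sum_const, nsmul_eq_mul]
  rw [cCount_eq_filter, cCount_eq_filter]
  ring

lemma eval_zero_relPoly (G : SimpleGraph V) : (relPoly G).eval 0 = 0 := by
  rw [relPoly, Polynomial.eval_finset_sum]
  apply Finset.sum_eq_zero
  intro s _
  by_cases hc : (G.induce (s : Set V)).Connected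
  · rw [if_pos hc]
    have hpos : 1 ≤ s.card := Finset.card_pos.mpr (conn_nonempty hc)
    obtain ⟨j, hj⟩ : ∃ j, s.card = j + 1 := ⟨s.card - 1, by omega⟩
    simp [hj]
  · simp [hc]

lemma eval_one_relPoly (G : SimpleGraph V) (hG : G.Connected) :
    (relPoly G).eval 1 = 1 := by
  rw [relPoly, Polynomial.eval_finset_sum]
  rw [Finset.sum_eq_single_of_mem (Finset.univ : Finset V) (Finset.mem_univ _)]
  · have hc : (G.induce ((Finset.univ : Finset V) : Set V)).Connected := by
      rw [Finset.coe_univ]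
      exact (G.induceUnivIso.connected_iff).mpr hG
    rw [if_pos hc, Finset.card_univ, Nat.sub_self]
    simp
  · intro s _ hs
    have hlt : s.card < Fintype.card V := by
      have := Finset.card_le_univ s
      rcases this.lt_or_eq with h | h
      · exact h
      · exact absurd (Finset.eq_univ_of_card s (h.trans Finset.card_univ.symm)) hs
    obtain ⟨j, hj⟩ : ∃ j, Fintype.card V - s.card = j + 1 := ⟨Fintype.card V - s.card - 1, by omega⟩
    by_cases hc : (G.induce (s : Set V)).Connected
    · rw [if_pos hc, hj]
      simp
    · simp [hc]

end NRelAux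

theorem stmt12 {V : Type*} [Fintype V] (T : SimpleGraph V)
    (hT : T.Connected) (hac : T.IsAcyclic)
    (n : ℕ) (hn : n = Fintype.card V) (hn4 : 4 ≤ n) :
    ∃ a ∈ Set.Ioo (0:ℝ) 1, ∃ b ∈ Set.Ioo (0:ℝ) 1,
      iteratedDeriv 2 (nRel T) a < 0 ∧ 0 < iteratedDeriv 2 (nRel T) b := by

  classical
  subst hn
  set n := Fintype.card V with hn
  set P : Polynomial ℝ := NRelAux.relPoly T with hP
  -- second derivative as polynomial eval
  have hderiv1 : deriv (fun x => P.eval x) = fun x => (Polynomial.derivative P).eval x := by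
    funext x; exact Polynomial.deriv P
  have hd2 : iteratedDeriv 2 (nRel T)
      = fun x => (Polynomial.derivative (Polynomial.derivative P)).eval x := by
    rw [NRelAux.nRel_eq]
    rw [show (2:ℕ) = 1 + 1 from rfl, iteratedDeriv_succ, iteratedDeriv_one, hderiv1]
    funext x
    exact Polynomial.deriv _
  -- coefficient 2 is negative
  have hc1 : cCount T 1 = n := NRelAux.cCount_one T
  have hc2 : cCount T 2 ≤ n.choose 2 := NRelAux.cCount_le T 2
  have hch2 : n.choose 2 < n * (n - 1) := by
    rw [Nat.choose_two_right]
    exact Nat.div_lt_self (Nat.mul_pos (by omega) (by omega)) one_lt_two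
  have hcoeff : P.coeff 2 < 0 := by
    rw [NRelAux.coeff2_relPoly T, hc1]
    have h1 : (cCount T 2 : ℝ) < ((n * (n-1) : ℕ) : ℝ) := by
      exact_mod_cast lt_of_le_of_lt hc2 hch2
    have h2 : ((n * (n-1) : ℕ) : ℝ) = ((n:ℝ) - 1) * (n:ℝ) := by
      push_cast [Nat.cast_sub (by omega : 1 ≤ n)]
      ring
    rw [h2] at h1
    linarith
  -- negative point
  have hcont : Continuous fun x => (Polynomial.derivative (Polynomial.derivative P)).eval x :=
    Polynomial.continuous _
  have hval0 : (Polynomial.derivative (Polynomial.derivative P)).eval 0 = 2 * P.coeff 2 := by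
    rw [← Polynomial.coeff_zero_eq_eval_zero, Polynomial.coeff_derivative,
      Polynomial.coeff_derivative]
    push_cast
    ring
  obtain ⟨a, ha, hA⟩ : ∃ a ∈ Set.Ioo (0:ℝ) 1,
      (Polynomial.derivative (Polynomial.derivative P)).eval a < 0 := by
    have hopen : IsOpen {x : ℝ | (Polynomial.derivative (Polynomial.derivative P)).eval x < 0} :=
      isOpen_lt hcont continuous_const
    have h0 : (0:ℝ) ∈ {x : ℝ | (Polynomial.derivative (Polynomial.derivative P)).eval x < 0} := by
      simp only [Set.mem_setOf_eq, hval0]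
      linarith
    obtain ⟨ε, hε, hball⟩ := Metric.isOpen_iff.mp hopen 0 h0
    refine ⟨min ε 1 / 2, ⟨by positivity, by
      have := min_le_right ε 1; linarith⟩, hball ?_⟩
    rw [Metric.mem_ball, Real.dist_eq, sub_zero, abs_of_pos (by positivity)]
    have := min_le_left ε 1
    linarith
  -- positive point
  have hP'1 : (1:ℝ) ≤ (Polynomial.derivative P).eval 1 := by
    rw [NRelAux.deriv_eval_one_relPoly T (by omega)]
    rw [NRelAux.cCount_univ hT]
    have hle := NRelAux.cCount_pred hT hac (by omega)
    have : (cCount T (n - 1) : ℝ) ≤ ((n:ℝ) - 1) := by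
      have h2 : ((n - 1 : ℕ) : ℝ) = (n:ℝ) - 1 := by
        push_cast [Nat.cast_sub (by omega : 1 ≤ n)]; ring
      rw [← h2]
      exact_mod_cast hle
    push_cast
    linarith
  obtain ⟨b, hb, hB⟩ : ∃ b ∈ Set.Ioo (0:ℝ) 1,
      0 < (Polynomial.derivative (Polynomial.derivative P)).eval b := by
    by_contra hcon
    push_neg at hcon
    -- u1 = P' - 1 is antitone on [0,1]
    set u1 : ℝ → ℝ := fun x => (Polynomial.derivative P).eval x - 1 with hu1
    have hu1d : ∀ x : ℝ, HasDerivAt u1 ((Polynomial.derivative (Polynomial.derivative P)).eval x) x :=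
      fun x => ((Polynomial.derivative P).hasDerivAt x).sub_const 1
    have hanti : AntitoneOn u1 (Set.Icc 0 1) := by
      apply antitoneOn_of_deriv_nonpos (convex_Icc 0 1)
      · exact (((Polynomial.derivative P).continuous).sub continuous_const).continuousOn
      · intro x _
        exact ((hu1d x).differentiableAt).differentiableWithinAt
      · intro x hx
        rw [interior_Icc] at hx
        rw [(hu1d x).deriv]
        exact hcon x hx
    have hu1_nonneg : ∀ x ∈ Set.Icc (0:ℝ) 1, 0 ≤ u1 x := by
      intro x hx
      have h1 : u1 1 ≤ u1 x := hanti hx (Set.right_mem_Icc.mpr zero_le_one) hx.2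
      have : (0:ℝ) ≤ u1 1 := by simp only [hu1]; linarith
      linarith
    -- u = P - id is monotone on [0,1]
    set u : ℝ → ℝ := fun x => P.eval x - x with hu
    have hud : ∀ x : ℝ, HasDerivAt u (u1 x) x := by
      intro x
      have := (P.hasDerivAt x).sub (hasDerivAt_id x)
      exact this
    have hmono : MonotoneOn u (Set.Icc 0 1) := by
      apply monotoneOn_of_deriv_nonneg (convex_Icc 0 1)
      · exact ((P.continuous).sub continuous_id).continuousOn
      · intro x _
        exact ((hud x).differentiableAt).differentiableWithinAt
      · intro x hx
        rw [interior_Icc] at hx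
        rw [(hud x).deriv]
        exact hu1_nonneg x (Set.mem_Icc_of_Ioo hx)
    have hu0 : u 0 = 0 := by
      simp [hu, hP, NRelAux.eval_zero_relPoly T]
    have hu1val : u 1 = 0 := by
      simp [hu, hP, NRelAux.eval_one_relPoly T hT]
    have hzero : ∀ x ∈ Set.Icc (0:ℝ) 1, u x = 0 := by
      intro x hx
      have h1 := hmono (Set.left_mem_Icc.mpr zero_le_one) hx hx.1
      have h2 := hmono hx (Set.right_mem_Icc.mpr zero_le_one) hx.2
      rw [hu0] at h1; rw [hu1val] at h2
      linarith
    -- so P = X as polynomials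
    have hPX : P - Polynomial.X = 0 := by
      apply Polynomial.eq_zero_of_infinite_isRoot
      apply Set.Infinite.mono _ (Set.Icc_infinite (by norm_num : (0:ℝ) < 1))
      intro x hx
      simp only [Set.mem_setOf_eq, Polynomial.IsRoot, Polynomial.eval_sub, Polynomial.eval_X]
      have := hzero x hx
      simp only [hu] at this
      linarith
    have : P.coeff 2 = 0 := by
      have h := sub_eq_zero.mp hPX
      rw [h]
      simp [Polynomial.coeff_X]
    linarith
  rw [hd2]
  exact ⟨a, ha, b, hb, hA, hB⟩
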